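/- For multiplicity functions m, m' : Finset (Fin N) → ZMod d, the qudit hypergraph states satisfy |H(m)⟩ = |H(m')⟩ if and only if m = m'. In other words, the map m ↦ |H(m)⟩ from multiplicity functions to vectors is injective, so multi-hypergraphs and qudit hypergraph states are in one-to-one correspondence. -/

import Mathlib

open Finset

noncomputable section

/-- The primitive `d`-th root of unity `ω = exp(2πi/d)`. -/
def omega (d : ℕ) : ℂ := Complex.exp (2 * Real.pi * Complex.I / d)

/-- The `N`-qudit Hilbert space, modeled as functions from points to amplitudes. -/
abbrev QV (d N : ℕ) := (Fin N → Fin d) → ℂ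

/-- The qudit hypergraph state `|H(m)⟩` for a multiplicity function `m`. -/
def Hstate (d N : ℕ) (m : Finset (Fin N) → ZMod d) : QV d N :=
  fun i => (d : ℂ) ^ (-(N : ℂ)/2) *
    omega d ^ (∑ e : Finset (Fin N), m e * ∏ k ∈ e, ((i k : ℕ) : ZMod d)).val

/-- Two qudit hypergraph states are equal iff their multiplicity
functions coincide: multi-hypergraphs and qudit hypergraph states are in one-to-one
correspondence. -/
theorem Hstate_inj_iff (d N : ℕ) (hd : 2 ≤ d) (hN : 1 ≤ N)
    (m m' : Finset (Fin N) → ZMod d) :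
    Hstate d N m = Hstate d N m' ↔ m = m' := by
  haveI : NeZero d := ⟨by omega⟩
  constructor
  · intro h
    have hω : IsPrimitiveRoot (omega d) d :=
      Complex.isPrimitiveRoot_exp d (by omega)
    have hc : (d : ℂ) ^ (-(N : ℂ)/2) ≠ 0 := by
      intro hz
      rw [Complex.cpow_eq_zero_iff] at hz
      exact (Nat.cast_ne_zero.mpr (by omega : d ≠ 0)) hz.1
    have key : ∀ i : Fin N → Fin d,
        (∑ e : Finset (Fin N), m e * ∏ k ∈ e, ((i k : ℕ) : ZMod d)) =
        (∑ e : Finset (Fin N), m' e * ∏ k ∈ e, ((i k : ℕ) : ZMod d)) := by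
      intro i
      have h1 := congrFun h i
      simp only [Hstate] at h1
      have h2 := mul_left_cancel₀ hc h1
      exact ZMod.val_injective d (hω.pow_inj (ZMod.val_lt _) (ZMod.val_lt _) h2)
    funext e
    induction e using Finset.strongInduction with
    | _ e IH =>
      set i : Fin N → Fin d := fun k => if k ∈ e then 1 else 0 with hi
      have hcast : ∀ k, ((i k : ℕ) : ZMod d) = if k ∈ e then 1 else 0 := by
        intro k
        by_cases hk : k ∈ e <;> simp [hi, hk, Fin.val_one', Nat.mod_eq_of_lt hd]
      have hprod : ∀ e' : Finset (Fin N),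
          (∏ k ∈ e', ((i k : ℕ) : ZMod d)) = if e' ⊆ e then 1 else 0 := by
        intro e'
        by_cases hs : e' ⊆ e
        · rw [if_pos hs]
          exact Finset.prod_eq_one (fun k hk => by rw [hcast, if_pos (hs hk)])
        · rw [if_neg hs]
          obtain ⟨k, hk, hke⟩ := Finset.not_subset.mp hs
          exact Finset.prod_eq_zero hk (by rw [hcast, if_neg hke])
      have hsum : ∀ mm : Finset (Fin N) → ZMod d,
          (∑ e' : Finset (Fin N), mm e' * ∏ k ∈ e', ((i k : ℕ) : ZMod d)) =
          ∑ e' ∈ e.powerset, mm e' := by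
        intro mm
        rw [Finset.sum_congr rfl (fun e' _ => by rw [hprod e'])]
        simp only [mul_ite, mul_one, mul_zero]
        rw [← Finset.sum_filter]
        congr 1
        ext e'
        simp [Finset.mem_powerset]
      have hk := key i
      rw [hsum m, hsum m'] at hk
      have hee : e ∈ e.powerset := Finset.mem_powerset_self e
      rw [← Finset.sum_erase_add _ _ hee, ← Finset.sum_erase_add _ _ hee] at hk
      have hrest : ∑ e' ∈ e.powerset.erase e, m e' =
          ∑ e' ∈ e.powerset.erase e, m' e' := by
        refine Finset.sum_congr rfl (fun e' he' => ?_)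
        rw [Finset.mem_erase, Finset.mem_powerset] at he'
        exact IH e' (lt_of_le_of_ne he'.2 he'.1)
      rw [hrest] at hk
      exact add_left_cancel hk
  · intro h; rw [h]

end
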